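/- Let v be a strictly positive left eigenvector common to positive matrices M_k (vM_k = ρ_k v), satisfying the uniform ratio bound of Hypothesis 2, and suppose the products satisfy M_{k,n}(i,j) = (∏_{r=k}^n ρ_r) u_i(M_{k,n}) v_j (1 + θ_{i,j} β^{n-k}) with |θ_{i,j}| ≤ C, β ∈ (0,1). Then D_n(j) = Σ_{k=1}^n ⟨w_k, M_{k+1,n} e_j⟩ admits the representation D_n(j) = (v_j/|v|) Σ_{k=1}^n η_{k,n} e^{S_n - S_{k-1}} (1 + O(β^{n-k})), where η_{k,n} := (|v|/ρ_k)⟨w_k, u(M_{k+1,n})⟩, and consequently D_n(j)/|D_n| → v_j/|v| whenever Σ_k η_{k,n} e^{-S_{k-1}} converges to a positive finite limit and the β-error terms are negligible. -/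

import Mathlib

open Finset Filter

/-- Representation of `D_n(j) = Σ_{k=1}^n ⟨w_k, M_{k+1,n} e_j⟩` for products of
positive matrices `M_{k,n}` sharing the common positive left eigenvector `v`
and admitting `M_{k,n}(i,j) = (∏_{r=k}^n ρ_r) u_i(M_{k,n}) v_j (1 + θ β^{n-k})`
with `|θ| ≤ C`:
`D_n(j) = (v_j/|v|) Σ_{k=1}^n η_{k,n} e^{S_n - S_{k-1}} (1 + O(β^{n-k}))`,
where `η_{k,n} = (|v|/ρ_k)⟨w_k, u(M_{k+1,n})⟩` and `S_n = Σ_{r≤n} log ρ_r`;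
consequently `D_n(j)/|D_n| → v_j/|v|` whenever `Σ_k η_{k,n} e^{-S_{k-1}}`
converges to a positive finite limit and the `β`-error terms are negligible. -/
theorem Dn_representation {K : ℕ} [NeZero K]
    (Mkn : ℕ → ℕ → Matrix (Fin K) (Fin K) ℝ)
    (ρ : ℕ → ℝ) (v : Fin K → ℝ) (w : ℕ → Fin K → ℝ)
    (u : ℕ → ℕ → Fin K → ℝ) (θ : ℕ → ℕ → Fin K → Fin K → ℝ)
    (β C : ℝ) (hβ0 : 0 < β) (hβ1 : β < 1) (hC : 0 < C)
    (hρ : ∀ k, 0 < ρ k) (hv : ∀ j, 0 < v j)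
    (hw : ∀ k j, 0 ≤ w k j) (hu : ∀ k n i, 0 ≤ u k n i)
    (hθ : ∀ k n i j, |θ k n i j| ≤ C)
    (hrep : ∀ k n, 1 ≤ k → k ≤ n + 1 → ∀ i j,
      Mkn k n i j = (∏ r ∈ Finset.Icc k n, ρ r) * u k n i * v j *
        (1 + θ k n i j * β ^ (n - k)))
    (S : ℕ → ℝ) (hS : ∀ n, S n = ∑ r ∈ Finset.Icc 1 n, Real.log (ρ r))
    (D : ℕ → Fin K → ℝ)
    (hD : ∀ n j, D n j = ∑ k ∈ Finset.Icc 1 n, ∑ i, w k i * Mkn (k + 1) n i j)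
    (η : ℕ → ℕ → ℝ)
    (hη : ∀ k n, η k n = ((∑ j, v j) / ρ k) * ∑ i, w k i * u (k + 1) n i) :
    (∃ C' > 0, ∀ n, 1 ≤ n → ∀ j, ∃ ε : ℕ → ℝ,
        (∀ k, |ε k| ≤ C' * β ^ (n - k)) ∧
        D n j = (v j / ∑ i, v i) *
          ∑ k ∈ Finset.Icc 1 n,
            η k n * Real.exp (S n - S (k - 1)) * (1 + ε k)) ∧
      (∀ G : ℝ, 0 < G →
        Tendsto (fun n => ∑ k ∈ Finset.Icc 1 n,
            η k n * Real.exp (-(S (k - 1)))) atTop (nhds G) →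
        Tendsto (fun n => ∑ k ∈ Finset.Icc 1 n,
            η k n * Real.exp (-(S (k - 1))) * β ^ (n - k)) atTop (nhds 0) →
        ∀ j, Tendsto (fun n => D n j / ∑ i, D n i) atTop
          (nhds (v j / ∑ i, v i))) := by
  set V : ℝ := ∑ i, v i with hVdef
  have hV0 : 0 < V := Finset.sum_pos (fun i _ => hv i) Finset.univ_nonempty
  set A : ℕ → ℕ → ℝ := fun k n => ∑ i, w k i * u (k+1) n i with hAdef
  set B : ℕ → ℕ → Fin K → ℝ := fun k n j => ∑ i, w k i * u (k+1) n i * θ (k+1) n i j with hBdef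
  have hA0 : ∀ k n, 0 ≤ A k n := fun k n =>
    Finset.sum_nonneg fun i _ => mul_nonneg (hw k i) (hu (k+1) n i)
  have hBA : ∀ k n j, |B k n j| ≤ C * A k n := by
    intro k n j
    calc |B k n j| ≤ ∑ i, |w k i * u (k+1) n i * θ (k+1) n i j| :=
          Finset.abs_sum_le_sum_abs _ _
      _ ≤ ∑ i, C * (w k i * u (k+1) n i) := by
          refine Finset.sum_le_sum fun i _ => ?_
          rw [abs_mul, abs_of_nonneg (mul_nonneg (hw k i) (hu (k+1) n i)), mul_comm]
          exact mul_le_mul_of_nonneg_right (hθ _ _ _ _)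
            (mul_nonneg (hw k i) (hu (k+1) n i))
      _ = C * A k n := by rw [← Finset.mul_sum]
  have hSIoc : ∀ n, S n = ∑ r ∈ Finset.Ioc 0 n, Real.log (ρ r) := by
    intro n; rw [hS]; congr 1
  have hexp : ∀ k n, k ≤ n →
      Real.exp (S n - S k) = ∏ r ∈ Finset.Icc (k+1) n, ρ r := by
    intro k n hkn
    have h1 : S k + ∑ r ∈ Finset.Ioc k n, Real.log (ρ r) = S n := by
      rw [hSIoc, hSIoc]
      exact Finset.sum_Ioc_consecutive _ (Nat.zero_le k) hkn
    have h2 : S n - S k = ∑ r ∈ Finset.Ioc k n, Real.log (ρ r) := by linarith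
    rw [h2, Real.exp_sum]
    have h3 : Finset.Icc (k+1) n = Finset.Ioc k n := by
      ext x; simp only [Finset.mem_Icc, Finset.mem_Ioc]; omega
    rw [h3]
    exact Finset.prod_congr rfl fun r _ => Real.exp_log (hρ r)
  have hSstep : ∀ k : ℕ, 1 ≤ k → S k = S (k-1) + Real.log (ρ k) := by
    intro k hk
    obtain ⟨m, rfl⟩ : ∃ m, k = m + 1 := ⟨k - 1, by omega⟩
    rw [hSIoc, hSIoc, Finset.sum_Ioc_succ_top (Nat.zero_le m)]
    simp
  have hβpow : ∀ n k : ℕ, β ^ (n - (k+1)) ≤ β ^ (n - k) / β := by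
    intro n k
    rw [le_div_iff₀ hβ0]
    calc β ^ (n-(k+1)) * β = β ^ (n - (k+1) + 1) := (pow_succ _ _).symm
      _ ≤ β ^ (n - k) := pow_le_pow_of_le_one hβ0.le hβ1.le (by omega)
  have key : ∀ n, 1 ≤ n → ∀ j, D n j =
      v j * Real.exp (S n) * ∑ k ∈ Finset.Icc 1 n,
        Real.exp (-(S k)) * (A k n + B k n j * β ^ (n - (k+1))) := by
    intro n hn j
    rw [hD, Finset.mul_sum]
    refine Finset.sum_congr rfl fun k hk => ?_
    obtain ⟨hk1, hkn⟩ := Finset.mem_Icc.mp hk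
    have hprod : ∏ r ∈ Finset.Icc (k+1) n, ρ r = Real.exp (S n) * Real.exp (-(S k)) := by
      rw [← hexp k n hkn, ← Real.exp_add]; ring_nf
    calc ∑ i, w k i * Mkn (k+1) n i j
        = ∑ i, (∏ r ∈ Finset.Icc (k+1) n, ρ r) * v j *
            (w k i * u (k+1) n i + w k i * u (k+1) n i * θ (k+1) n i j * β ^ (n - (k+1))) := by
          refine Finset.sum_congr rfl fun i _ => ?_
          rw [hrep (k+1) n (by omega) (by omega) i j]; ring
      _ = (∏ r ∈ Finset.Icc (k+1) n, ρ r) * v j * (A k n + B k n j * β ^ (n-(k+1))) := by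
          rw [← Finset.mul_sum, Finset.sum_add_distrib, ← Finset.sum_mul]
      _ = v j * Real.exp (S n) *
            (Real.exp (-(S k)) * (A k n + B k n j * β ^ (n-(k+1)))) := by
          rw [hprod]; ring
  have hAη : ∀ k n, 1 ≤ k →
      Real.exp (-(S k)) * A k n = η k n * Real.exp (-(S (k-1))) / V := by
    intro k n hk
    have h1 : Real.exp (-(S k)) = Real.exp (-(S (k-1))) / ρ k := by
      rw [hSstep k hk, neg_add, Real.exp_add, Real.exp_neg (Real.log (ρ k)),
        Real.exp_log (hρ k), div_eq_mul_inv]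
    rw [h1, hη, show (∑ i, w k i * u (k+1) n i) = A k n from rfl]
    field_simp [(hρ k).ne', hV0.ne']
  constructor
  · refine ⟨C / β, div_pos hC hβ0, ?_⟩
    intro n hn j
    refine ⟨fun k => if A k n = 0 then 0 else B k n j / A k n * β ^ (n - (k+1)), ?_, ?_⟩
    · intro k
      by_cases h : A k n = 0
      · simp only [h, if_true, abs_zero]
        positivity
      · simp only [h, if_false]
        have hApos : 0 < A k n := lt_of_le_of_ne (hA0 k n) (Ne.symm h)
        rw [abs_mul, abs_pow, abs_of_pos hβ0]
        have h1 : |B k n j / A k n| ≤ C := by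
          rw [abs_div, abs_of_pos hApos, div_le_iff₀ hApos]
          exact hBA k n j
        calc |B k n j / A k n| * β ^ (n-(k+1)) ≤ C * (β^(n-k)/β) :=
              mul_le_mul h1 (hβpow n k) (by positivity) hC.le
          _ = C / β * β ^ (n-k) := by ring
    · rw [key n hn j, Finset.mul_sum, Finset.mul_sum]
      refine Finset.sum_congr rfl fun k hk => ?_
      obtain ⟨hk1, hkn⟩ := Finset.mem_Icc.mp hk
      have hexpk : Real.exp (S n - S (k-1)) = ρ k * (Real.exp (S n) * Real.exp (-(S k))) := by
        have h1 : S n - S (k-1) = Real.log (ρ k) + (S n + -(S k)) := by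
          rw [hSstep k hk1]; ring
        rw [h1, Real.exp_add, Real.exp_add, Real.exp_log (hρ k)]
      rw [hη, hexpk]
      by_cases h : A k n = 0
      · have hB0 : B k n j = 0 := by
          have := hBA k n j
          rw [h, mul_zero] at this
          exact abs_eq_zero.mp (le_antisymm this (abs_nonneg _))
        simp only [h, if_true]
        rw [show (∑ i, w k i * u (k+1) n i) = A k n from rfl, h, hB0]
        ring
      · simp only [h, if_false]
        rw [show (∑ i, w k i * u (k+1) n i) = A k n from rfl]
        field_simp [h, (hρ k).ne', hV0.ne']
  · intro G hG hGtend hHtend j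
    have hFtend : ∀ j', Tendsto (fun n => ∑ k ∈ Finset.Icc 1 n,
        Real.exp (-(S k)) * (A k n + B k n j' * β ^ (n - (k+1)))) atTop (nhds (G / V)) := by
      intro j'
      have hFdecomp : ∀ n, (∑ k ∈ Finset.Icc 1 n,
          Real.exp (-(S k)) * (A k n + B k n j' * β ^ (n - (k+1)))) =
          (∑ k ∈ Finset.Icc 1 n, η k n * Real.exp (-(S (k-1)))) / V +
          ∑ k ∈ Finset.Icc 1 n, Real.exp (-(S k)) * B k n j' * β ^ (n-(k+1)) := by
        intro n
        rw [Finset.sum_div, ← Finset.sum_add_distrib]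
        refine Finset.sum_congr rfl fun k hk => ?_
        have hk1 := (Finset.mem_Icc.mp hk).1
        rw [← hAη k n hk1]; ring
      have hRbound : ∀ n, |∑ k ∈ Finset.Icc 1 n,
          Real.exp (-(S k)) * B k n j' * β^(n-(k+1))| ≤
          C/(β*V) * ∑ k ∈ Finset.Icc 1 n, η k n * Real.exp (-(S (k-1))) * β^(n-k) := by
        intro n
        calc |∑ k ∈ Finset.Icc 1 n, Real.exp (-(S k)) * B k n j' * β^(n-(k+1))|
            ≤ ∑ k ∈ Finset.Icc 1 n, |Real.exp (-(S k)) * B k n j' * β^(n-(k+1))| :=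
              Finset.abs_sum_le_sum_abs _ _
          _ ≤ ∑ k ∈ Finset.Icc 1 n, C/(β*V) * (η k n * Real.exp (-(S (k-1))) * β^(n-k)) := by
              refine Finset.sum_le_sum fun k hk => ?_
              have hk1 := (Finset.mem_Icc.mp hk).1
              rw [abs_mul, abs_mul, abs_of_pos (Real.exp_pos _), abs_pow, abs_of_pos hβ0]
              calc Real.exp (-(S k)) * |B k n j'| * β^(n-(k+1))
                  ≤ Real.exp (-(S k)) * (C * A k n) * (β^(n-k)/β) :=
                    mul_le_mul (mul_le_mul_of_nonneg_left (hBA k n j') (Real.exp_pos _).le)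
                      (hβpow n k) (by positivity)
                      (mul_nonneg (Real.exp_pos _).le (mul_nonneg hC.le (hA0 k n)))
                _ = C/β * (Real.exp (-(S k)) * A k n) * β^(n-k) := by ring
                _ = C/β * (η k n * Real.exp (-(S (k-1))) / V) * β^(n-k) := by
                    rw [hAη k n hk1]
                _ = C/(β*V) * (η k n * Real.exp (-(S (k-1))) * β^(n-k)) := by
                    field_simp
          _ = C/(β*V) * ∑ k ∈ Finset.Icc 1 n, η k n * Real.exp (-(S (k-1))) * β^(n-k) := by
              rw [← Finset.mul_sum]
      have hRtend : Tendsto (fun n => ∑ k ∈ Finset.Icc 1 n,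
          Real.exp (-(S k)) * B k n j' * β^(n-(k+1))) atTop (nhds 0) := by
        have hgt : Tendsto (fun n => C/(β*V) * ∑ k ∈ Finset.Icc 1 n,
            η k n * Real.exp (-(S (k-1))) * β^(n-k)) atTop (nhds 0) := by
          have := hHtend.const_mul (C/(β*V))
          simpa using this
        exact squeeze_zero_norm
          (fun n => by rw [Real.norm_eq_abs]; exact hRbound n) hgt
      have hGtend' : Tendsto (fun n => (∑ k ∈ Finset.Icc 1 n,
          η k n * Real.exp (-(S (k-1)))) / V) atTop (nhds (G / V)) :=
        hGtend.div_const V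
      have := hGtend'.add hRtend
      rw [add_zero] at this
      exact this.congr fun n => (hFdecomp n).symm
    have hnum : Tendsto (fun n => v j * ∑ k ∈ Finset.Icc 1 n,
        Real.exp (-(S k)) * (A k n + B k n j * β ^ (n - (k+1)))) atTop
        (nhds (v j * (G / V))) := (hFtend j).const_mul (v j)
    have hden : Tendsto (fun n => ∑ i, v i * ∑ k ∈ Finset.Icc 1 n,
        Real.exp (-(S k)) * (A k n + B k n i * β ^ (n - (k+1)))) atTop (nhds G) := by
      have h1 : Tendsto (fun n => ∑ i, v i * ∑ k ∈ Finset.Icc 1 n,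
          Real.exp (-(S k)) * (A k n + B k n i * β ^ (n - (k+1)))) atTop
          (nhds (∑ i : Fin K, v i * (G / V))) :=
        tendsto_finset_sum _ fun i _ => (hFtend i).const_mul (v i)
      have h2 : (∑ i : Fin K, v i * (G / V)) = G := by
        rw [← Finset.sum_mul, ← hVdef]
        field_simp
      rwa [h2] at h1
    have hlim := hnum.div hden (ne_of_gt hG)
    have hval : v j * (G / V) / G = v j / V := by
      field_simp
    rw [hval] at hlim
    refine hlim.congr' ?_
    filter_upwards [eventually_ge_atTop 1] with n hn
    have hDsum : (∑ i, D n i) = Real.exp (S n) * ∑ i, v i * ∑ k ∈ Finset.Icc 1 n,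
        Real.exp (-(S k)) * (A k n + B k n i * β ^ (n - (k+1))) := by
      rw [Finset.mul_sum]
      exact Finset.sum_congr rfl fun i _ => by rw [key n hn i]; ring
    rw [key n hn j, hDsum, show v j * Real.exp (S n) * (∑ k ∈ Finset.Icc 1 n,
        Real.exp (-(S k)) * (A k n + B k n j * β ^ (n - (k+1)))) =
        Real.exp (S n) * (v j * ∑ k ∈ Finset.Icc 1 n,
        Real.exp (-(S k)) * (A k n + B k n j * β ^ (n - (k+1)))) from by ring,
      mul_div_mul_left _ _ (Real.exp_ne_zero _)]
    rfl
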